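/- For any two nonempty finite metric spaces X and Y there exists a correspondence R between X and Y that is simultaneously optimal (d_GH(X,Y) = (1/2) · dis R) and irreducible (minimal with respect to inclusion among all correspondences between X and Y). -/

import Mathlib

/-- A correspondence between `X` and `Y` is a relation whose projections onto both
factors are surjective. -/
def IsCorrespondence {X Y : Type*} (R : Set (X × Y)) : Prop :=
  (∀ x : X, ∃ y : Y, (x, y) ∈ R) ∧ (∀ y : Y, ∃ x : X, (x, y) ∈ R)

/-- The distortion of a relation between two metric spaces. -/
noncomputable def relDis {X Y : Type*} [MetricSpace X] [MetricSpace Y]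
    (R : Set (X × Y)) : ℝ :=
  sSup {r : ℝ | ∃ p ∈ R, ∃ q ∈ R, r = |dist p.1 q.1 - dist p.2 q.2|}

/-- A correspondence is irreducible if it is minimal with respect to inclusion among
all correspondences. -/
def IsIrreducibleCorrespondence {X Y : Type*} (R : Set (X × Y)) : Prop :=
  IsCorrespondence R ∧ ∀ R' : Set (X × Y), R' ⊆ R → IsCorrespondence R' → R' = R

open Metric GromovHausdorff Set

section Aux

variable {X Y : Type} [MetricSpace X] [Finite X] [Nonempty X]
  [MetricSpace Y] [Finite Y] [Nonempty Y]

lemma relDisSet_finite (R : Set (X × Y)) :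
    {r : ℝ | ∃ p ∈ R, ∃ q ∈ R, r = |dist p.1 q.1 - dist p.2 q.2|}.Finite := by
  have h : {r : ℝ | ∃ p ∈ R, ∃ q ∈ R, r = |dist p.1 q.1 - dist p.2 q.2|} ⊆
      (fun pq : (X × Y) × (X × Y) => |dist pq.1.1 pq.2.1 - dist pq.1.2 pq.2.2|) '' univ := by
    rintro r ⟨p, hp, q, hq, rfl⟩
    exact ⟨(p, q), trivial, rfl⟩
  exact (Set.finite_univ.image _).subset h

lemma abs_le_relDis {R : Set (X × Y)} {p q : X × Y} (hp : p ∈ R) (hq : q ∈ R) :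
    |dist p.1 q.1 - dist p.2 q.2| ≤ relDis R :=
  le_csSup (relDisSet_finite R).bddAbove ⟨p, hp, q, hq, rfl⟩

lemma relDis_nonneg {R : Set (X × Y)} (hR : R.Nonempty) : 0 ≤ relDis R := by
  obtain ⟨p, hp⟩ := hR
  have := abs_le_relDis hp hp
  simpa using this

/-- The key (hard) inequality: for any correspondence `R`,
`ghDist X Y ≤ (1/2) * relDis R`, proved by gluing the spaces along `R`. -/
lemma ghDist_le_half_relDis (R : Set (X × Y)) (hR : IsCorrespondence R) :
    ghDist X Y ≤ (1 / 2) * relDis R := by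
  have hne : R.Nonempty := by
    obtain ⟨y, hy⟩ := hR.1 (Classical.arbitrary X)
    exact ⟨_, hy⟩
  have h0 : 0 ≤ relDis R := relDis_nonneg hne
  refine le_of_forall_pos_le_add fun δ δ0 => ?_
  haveI : Nonempty R := hne.to_subtype
  set ε : ℝ := 1 / 2 * relDis R + δ with hε
  have εpos : 0 < ε := by positivity
  have H : ∀ p q : R, |dist ((p : X × Y).1) ((q : X × Y).1) -
      dist ((p : X × Y).2) ((q : X × Y).2)| ≤ 2 * ε := by
    intro p q
    have := abs_le_relDis p.2 q.2
    rw [hε]; linarith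
  letI : MetricSpace (X ⊕ Y) :=
    glueMetricApprox (fun p : R => (p : X × Y).1) (fun p : R => (p : X × Y).2) ε εpos H
  have Il : Isometry (Sum.inl : X → X ⊕ Y) := Isometry.of_dist_eq fun x y => rfl
  have Ir : Isometry (Sum.inr : Y → X ⊕ Y) := Isometry.of_dist_eq fun x y => rfl
  refine (ghDist_le_hausdorffDist Il Ir).trans ?_
  refine hausdorffDist_le_of_mem_dist εpos.le ?_ ?_
  · rintro _ ⟨x, rfl⟩
    obtain ⟨y, hy⟩ := hR.1 x
    refine ⟨Sum.inr y, mem_range_self _, ?_⟩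
    exact le_of_eq (glueDist_glued_points (Z := R)
      (fun p : R => (p : X × Y).1) (fun p : R => (p : X × Y).2) ε ⟨(x, y), hy⟩)
  · rintro _ ⟨y, rfl⟩
    obtain ⟨x, hx⟩ := hR.2 y
    refine ⟨Sum.inl x, mem_range_self _, ?_⟩
    rw [dist_comm]
    exact le_of_eq (glueDist_glued_points (Z := R)
      (fun p : R => (p : X × Y).1) (fun p : R => (p : X × Y).2) ε ⟨(x, y), hx⟩)

/-- The easy direction: there is a correspondence with distortion at most `2 * ghDist`,
coming from the optimal coupling. -/
lemma exists_correspondence_relDis_le :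
    ∃ R : Set (X × Y), IsCorrespondence R ∧ relDis R ≤ 2 * ghDist X Y := by
  set Φ := optimalGHInjl X Y with hΦ
  set Ψ := optimalGHInjr X Y with hΨ
  have IΦ : Isometry Φ := isometry_optimalGHInjl X Y
  have IΨ : Isometry Ψ := isometry_optimalGHInjr X Y
  have hopt : hausdorffDist (range Φ) (range Ψ) = ghDist X Y := hausdorffDist_optimal
  have hfin : EMetric.hausdorffEdist (range Φ) (range Ψ) ≠ ⊤ :=
    hausdorffEdist_ne_top_of_nonempty_of_bounded (range_nonempty _) (range_nonempty _)
      (Set.finite_range _).isBounded (Set.finite_range _).isBounded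
  have hc1 : ∀ x : X, ∃ y : Y, dist (Φ x) (Ψ y) ≤ ghDist X Y := by
    intro x
    obtain ⟨z, hz, hzd⟩ := (Set.finite_range Ψ).isCompact.exists_infDist_eq_dist
      (range_nonempty _) (Φ x)
    obtain ⟨y, rfl⟩ := hz
    refine ⟨y, ?_⟩
    have h1 : infDist (Φ x) (range Ψ) ≤ hausdorffDist (range Φ) (range Ψ) :=
      infDist_le_hausdorffDist_of_mem (mem_range_self _) hfin
    rw [← hzd]
    linarith [h1, hopt.le]
  refine ⟨{p : X × Y | dist (Φ p.1) (Ψ p.2) ≤ ghDist X Y}, ⟨fun x => hc1 x, ?_⟩, ?_⟩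
  · intro y
    obtain ⟨z, hz, hzd⟩ := (Set.finite_range Φ).isCompact.exists_infDist_eq_dist
      (range_nonempty _) (Ψ y)
    obtain ⟨x, rfl⟩ := hz
    refine ⟨x, ?_⟩
    have h1 : infDist (Ψ y) (range Φ) ≤ hausdorffDist (range Ψ) (range Φ) :=
      infDist_le_hausdorffDist_of_mem (mem_range_self _)
        (by rwa [EMetric.hausdorffEdist_comm])
    rw [hausdorffDist_comm] at h1
    simp only [Set.mem_setOf_eq]
    rw [dist_comm (Φ x) (Ψ y), ← hzd]
    linarith [h1, hopt.le]
  · apply csSup_le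
    · obtain ⟨y, hy⟩ := hc1 (Classical.arbitrary X)
      exact ⟨_, (Classical.arbitrary X, y), hy, (Classical.arbitrary X, y), hy, rfl⟩
    · rintro r ⟨p, hp, q, hq, rfl⟩
      simp only [Set.mem_setOf_eq] at hp hq
      rw [← IΦ.dist_eq p.1 q.1, ← IΨ.dist_eq p.2 q.2]
      have h1 : |dist (Φ p.1) (Φ q.1) - dist (Ψ p.2) (Φ q.1)| ≤ dist (Φ p.1) (Ψ p.2) :=
        abs_dist_sub_le _ _ _
      have h2 : |dist (Φ q.1) (Ψ p.2) - dist (Ψ q.2) (Ψ p.2)| ≤ dist (Φ q.1) (Ψ q.2) :=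
        abs_dist_sub_le _ _ _
      rw [dist_comm (Φ q.1) (Ψ p.2), dist_comm (Ψ q.2) (Ψ p.2)] at h2
      calc |dist (Φ p.1) (Φ q.1) - dist (Ψ p.2) (Ψ q.2)|
          ≤ |dist (Φ p.1) (Φ q.1) - dist (Ψ p.2) (Φ q.1)| +
            |dist (Ψ p.2) (Φ q.1) - dist (Ψ p.2) (Ψ q.2)| := by
            have := abs_sub_abs_le_abs_sub (dist (Φ p.1) (Φ q.1)) (dist (Ψ p.2) (Ψ q.2))
            exact abs_sub_le _ _ _
        _ ≤ dist (Φ p.1) (Ψ p.2) + dist (Φ q.1) (Ψ q.2) := add_le_add h1 h2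
        _ ≤ 2 * ghDist X Y := by linarith [hp, hq]

end Aux

/-- Any two nonempty finite metric spaces admit a correspondence that is simultaneously
optimal and irreducible. -/
theorem exists_optimal_irreducible_correspondence
    (X Y : Type) [MetricSpace X] [Finite X] [Nonempty X]
    [MetricSpace Y] [Finite Y] [Nonempty Y] :
    ∃ R : Set (X × Y),
      GromovHausdorff.ghDist X Y = (1 / 2) * relDis R ∧
      IsIrreducibleCorrespondence R := by
  obtain ⟨R₀, hR₀, hdis₀⟩ := exists_correspondence_relDis_le (X := X) (Y := Y)
  -- pick a minimal correspondence contained in R₀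
  obtain ⟨R, hRS, hmin⟩ := Set.Finite.exists_minimalFor id
    {R' : Set (X × Y) | R' ⊆ R₀ ∧ IsCorrespondence R'} (Set.toFinite _)
    ⟨R₀, subset_rfl, hR₀⟩
  obtain ⟨hRsub, hRcorr⟩ := hRS
  have hRne : R.Nonempty := by
    obtain ⟨y, hy⟩ := hRcorr.1 (Classical.arbitrary X)
    exact ⟨_, hy⟩
  have hmono : relDis R ≤ relDis R₀ := by
    apply csSup_le_csSup (relDisSet_finite R₀).bddAbove
    · obtain ⟨p, hp⟩ := hRne
      exact ⟨_, p, hp, p, hp, rfl⟩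
    · rintro r ⟨p, hp, q, hq, rfl⟩
      exact ⟨p, hRsub hp, q, hRsub hq, rfl⟩
  refine ⟨R, ?_, hRcorr, ?_⟩
  · have h1 : GromovHausdorff.ghDist X Y ≤ (1 / 2) * relDis R :=
      ghDist_le_half_relDis R hRcorr
    have h2 : (1 / 2) * relDis R ≤ GromovHausdorff.ghDist X Y := by
      nlinarith [hmono, hdis₀]
    linarith
  · intro R' hsub hcorr
    exact hsub.antisymm (hmin ⟨hsub.trans hRsub, hcorr⟩ hsub)
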